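/- The number of labeled parking functions of size n is (n!)², and moreover the bivariate generating function Σ p^{a₁+···+a_n−n} q^{inv(b)} over labeled parking functions (a,b) equals ∏_{i=1}^n [(1−p^i)(1−q^i)]/[(1−p)(1−q)]. -/

import Mathlib

/-- A parking function of size `n`: a sequence in `[n]^n` whose weakly increasing
rearrangement `ã` satisfies `ã_i ≤ i`. -/
def IsParking (n : ℕ) (a : List ℕ) : Prop :=
  a.length = n ∧ (∀ x ∈ a, 1 ≤ x ∧ x ≤ n) ∧
  ∃ b : List ℕ, b.Perm a ∧ b.Pairwise (· ≤ ·) ∧ ∀ i < n, b.getD i 0 ≤ i + 1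

/-- A labeled parking function of size `n`: a pair `(a, b)` where `a` is a parking
function, `b` is a permutation of `[n]`, and `a_i ≤ b_i` for all `i`. -/
def IsLabeledParking (n : ℕ) (ab : List ℕ × List ℕ) : Prop :=
  IsParking n ab.1 ∧ ab.2.Perm (List.range' 1 n) ∧
  ∀ i < n, ab.1.getD i 0 ≤ ab.2.getD i 0

/-- The number of inversions of a word. -/
def invCount (b : List ℕ) : ℕ :=
  ((Finset.range b.length ×ˢ Finset.range b.length).filter
     (fun p => p.1 < p.2 ∧ b.getD p.2 0 < b.getD p.1 0)).card

/-! ### Auxiliary lemmas -/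

section Aux

open List

/-- Sum-of-indicators form of `invCount`. -/
lemma invCount_eq_sum (b : List ℕ) :
    invCount b = ∑ i ∈ Finset.range b.length, ∑ j ∈ Finset.range b.length,
      (if i < j ∧ b.getD j 0 < b.getD i 0 then 1 else 0) := by
  rw [invCount, Finset.card_filter, Finset.sum_product]

lemma countP_eq_sum (p : ℕ → Bool) (l : List ℕ) :
    l.countP p = ∑ i ∈ Finset.range l.length, (if p (l.getD i 0) then 1 else 0) := by
  induction l with
  | nil => simp
  | cons x t ih =>
    rw [length_cons, Finset.sum_range_succ', countP_cons, ih]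
    simp [List.getD_cons_succ, List.getD_cons_zero]

lemma invCount_cons (x : ℕ) (l : List ℕ) :
    invCount (x :: l) = l.countP (fun y => y < x) + invCount l := by
  rw [invCount_eq_sum, invCount_eq_sum, length_cons, Finset.sum_range_succ']
  have h1 : ∀ i : ℕ, (∑ j ∈ Finset.range (l.length + 1),
      (if i + 1 < j ∧ (x :: l).getD j 0 < (x :: l).getD (i + 1) 0 then 1 else 0))
      = ∑ j ∈ Finset.range l.length,
        (if i < j ∧ l.getD j 0 < l.getD i 0 then 1 else 0) := by
    intro i
    rw [Finset.sum_range_succ']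
    simp [List.getD_cons_succ]
  have h0 : (∑ j ∈ Finset.range (l.length + 1),
      (if 0 < j ∧ (x :: l).getD j 0 < (x :: l).getD 0 0 then 1 else 0))
      = l.countP (fun y => y < x) := by
    rw [Finset.sum_range_succ', countP_eq_sum]
    simp [List.getD_cons_succ, List.getD_cons_zero]
  rw [h0, Finset.sum_congr rfl (fun i _ => h1 i), Nat.add_comm]

lemma invCount_insertIdx {x : ℕ} : ∀ (b : List ℕ) (i : ℕ), i ≤ b.length →
    (∀ y ∈ b, x < y) → invCount (b.insertIdx i x) = invCount b + i := by
  intro b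
  induction b with
  | nil =>
    intro i hi _
    have : i = 0 := by simpa using hi
    subst this
    simp [List.insertIdx_zero, invCount_cons]
  | cons y u ih =>
    intro i hi hall
    match i with
    | 0 =>
      rw [List.insertIdx_zero, invCount_cons]
      have : (y :: u).countP (fun z => z < x) = 0 := by
        rw [List.countP_eq_zero]
        intro a ha
        simp only [decide_eq_true_eq]
        exact Nat.not_lt.2 (le_of_lt (hall a ha))
      omega
    | j + 1 =>
      rw [List.insertIdx_succ_cons, invCount_cons, invCount_cons]
      have hj : j ≤ u.length := by simpa using hi
      have hperm : (u.insertIdx j x).Perm (x :: u) := List.perm_insertIdx x u hj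
      have hcount : (u.insertIdx j x).countP (fun z => z < y)
          = u.countP (fun z => z < y) + 1 := by
        rw [hperm.countP_eq, List.countP_cons]
        have : x < y := hall y ((List.mem_cons_self (a := y) (l := u)))
        simp [this]
      rw [hcount, ih j hj (fun z hz => hall z (List.mem_cons_of_mem y hz))]
      omega

/-! #### Permutation lists -/

/-- All permutations of a list, generated by inserting the head everywhere. -/
def permsL : List ℕ → List (List ℕ)
  | [] => [[]]
  | x :: t => (permsL t).flatMap (fun b => (List.range (b.length + 1)).map
      (fun i => b.insertIdx i x))

lemma perm_of_mem_permsL : ∀ {l b : List ℕ}, b ∈ permsL l → b.Perm l := by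
  intro l
  induction l with
  | nil => intro b hb; simp [permsL] at hb; simp [hb]
  | cons x t ih =>
    intro b hb
    simp only [permsL, List.mem_flatMap, List.mem_map, List.mem_range] at hb
    obtain ⟨c, hc, i, hi, rfl⟩ := hb
    have hlen : i ≤ c.length := by omega
    exact (List.perm_insertIdx x c hlen).trans ((ih hc).cons x)

lemma insertIdx_indexOf_erase {x : ℕ} : ∀ {a : List ℕ}, x ∈ a →
    (a.erase x).insertIdx (a.idxOf x) x = a := by
  intro a
  induction a with
  | nil => intro h; simp at h
  | cons y s ih =>
    intro hx
    by_cases hxy : y = x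
    · subst hxy
      rw [List.erase_cons_head, List.idxOf_cons_self, List.insertIdx_zero]
    · have hxs : x ∈ s := by
        rcases List.mem_cons.1 hx with h | h
        · exact absurd h.symm hxy
        · exact h
      rw [List.erase_cons_tail (by simpa using hxy),
        List.idxOf_cons_ne _ hxy, Nat.succ_eq_add_one,
        List.insertIdx_succ_cons, ih hxs]

lemma mem_permsL_of_perm : ∀ {l b : List ℕ}, b.Perm l → b ∈ permsL l := by
  intro l
  induction l with
  | nil => intro b hb; simp [permsL, hb.eq_nil]
  | cons x t ih =>
    intro b hb
    have hx : x ∈ b := hb.mem_iff.2 ((List.mem_cons_self (a := x) (l := t)))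
    have herase : (b.erase x).Perm t := by
      have := hb.erase x
      rwa [List.erase_cons_head] at this
    have hidx : b.idxOf x < b.length := List.idxOf_lt_length_iff.2 hx
    have hlen : (b.erase x).length = b.length - 1 := by
      rw [List.length_erase]; simp [hx]
    simp only [permsL, List.mem_flatMap, List.mem_map, List.mem_range]
    exact ⟨b.erase x, ih herase, b.idxOf x, by omega, insertIdx_indexOf_erase hx⟩

lemma mem_permsL_iff {l b : List ℕ} : b ∈ permsL l ↔ b.Perm l :=
  ⟨perm_of_mem_permsL, mem_permsL_of_perm⟩

lemma indexOf_insertIdx {x : ℕ} : ∀ (b : List ℕ) (i : ℕ), i ≤ b.length → x ∉ b →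
    (b.insertIdx i x).idxOf x = i := by
  intro b
  induction b with
  | nil =>
    intro i hi _
    have : i = 0 := by simpa using hi
    subst this
    simp
  | cons y u ih =>
    intro i hi hx
    match i with
    | 0 => rw [List.insertIdx_zero, List.idxOf_cons_self]
    | j + 1 =>
      have hxy : y ≠ x := fun h => hx (h ▸ (List.mem_cons_self (a := y) (l := u)))
      rw [List.insertIdx_succ_cons, List.idxOf_cons_ne _ hxy,
        ih j (by simpa using hi) (fun h => hx (List.mem_cons_of_mem y h))]

lemma erase_insertIdx {x : ℕ} : ∀ (b : List ℕ) (i : ℕ), i ≤ b.length → x ∉ b →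
    (b.insertIdx i x).erase x = b := by
  intro b
  induction b with
  | nil =>
    intro i hi _
    have : i = 0 := by simpa using hi
    subst this
    simp
  | cons y u ih =>
    intro i hi hx
    match i with
    | 0 => rw [List.insertIdx_zero, List.erase_cons_head]
    | j + 1 =>
      have hxy : y ≠ x := fun h => hx (h ▸ (List.mem_cons_self (a := y) (l := u)))
      rw [List.insertIdx_succ_cons, List.erase_cons_tail (by simpa using hxy),
        ih j (by simpa using hi) (fun h => hx (List.mem_cons_of_mem y h))]

lemma nodup_permsL : ∀ {l : List ℕ}, l.Nodup → (permsL l).Nodup := by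
  intro l
  induction l with
  | nil => intro _; simp [permsL]
  | cons x t ih =>
    intro hnd
    have hxt : x ∉ t := (List.nodup_cons.1 hnd).1
    have hndt : t.Nodup := (List.nodup_cons.1 hnd).2
    rw [permsL, List.nodup_flatMap]
    constructor
    · intro b hb
      have hxb : x ∉ b := fun h => hxt ((perm_of_mem_permsL hb).mem_iff.1 h)
      refine List.Nodup.map_on ?_ (List.nodup_range)
      intro i hi j hj hij
      rw [List.mem_range] at hi hj
      have := indexOf_insertIdx b i (by omega) hxb
      have := indexOf_insertIdx b j (by omega) hxb
      rw [← this, ← hij]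
      omega
    · refine (ih hndt).imp_of_mem ?_
      intro b c hb hc hbc z hzb hzc
      have hxb : x ∉ b := fun h => hxt ((perm_of_mem_permsL hb).mem_iff.1 h)
      have hxc : x ∉ c := fun h => hxt ((perm_of_mem_permsL hc).mem_iff.1 h)
      simp only [List.mem_map, List.mem_range] at hzb hzc
      obtain ⟨i, hi, rfl⟩ := hzb
      obtain ⟨j, hj, heq⟩ := hzc
      apply hbc
      rw [← erase_insertIdx b i (by omega) hxb, ← erase_insertIdx c j (by omega) hxc, heq]

lemma length_mem_permsL {l b : List ℕ} (hb : b ∈ permsL l) : b.length = l.length :=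
  (perm_of_mem_permsL hb).length_eq

lemma list_sum_map_range (n : ℕ) (f : ℕ → ℚ) :
    ((List.range n).map f).sum = ∑ i ∈ Finset.range n, f i := by
  induction n with
  | zero => simp
  | succ k ih => rw [List.range_succ, List.map_append, List.sum_append,
      Finset.sum_range_succ, ih]; simp

lemma list_sum_map_const {α : Type*} (l : List α) (c : ℕ) :
    (l.map (fun _ => c)).sum = l.length * c := by
  induction l with
  | nil => simp
  | cons x t ih => simp [ih, Nat.succ_mul, Nat.add_comm]

lemma length_permsL : ∀ (l : List ℕ), (permsL l).length = l.length.factorial := by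
  intro l
  induction l with
  | nil => simp [permsL]
  | cons x t ih =>
    rw [permsL, List.length_flatMap]
    have : (List.map (List.length ∘ fun b => (List.range (b.length + 1)).map
        (fun i => b.insertIdx i x)) (permsL t)) = (permsL t).map (fun _ => t.length + 1) := by
      apply List.map_congr_left
      intro b hb
      simp [length_mem_permsL hb]
    simp only [Function.comp_def] at this
    rw [this, list_sum_map_const, ih, List.length_cons, Nat.factorial_succ]
    ring

lemma sum_permsL (q : ℚ) : ∀ (l : List ℕ), l.Pairwise (· < ·) →
    ((permsL l).map (fun b => q ^ invCount b)).sum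
      = ∏ i ∈ Finset.range l.length, (∑ t ∈ Finset.range (i + 1), q ^ t) := by
  intro l
  induction l with
  | nil => simp [permsL, invCount]
  | cons x t ih =>
    intro hsort
    rw [List.pairwise_cons] at hsort
    rw [permsL, List.map_flatMap, List.flatMap_def, List.sum_flatten, List.map_map]
    have h2 : (List.map (List.sum ∘ fun a => List.map (fun b => q ^ invCount b)
          (List.map (fun i => a.insertIdx i x) (List.range (a.length + 1)))) (permsL t))
        = (permsL t).map (fun b => (∑ i ∈ Finset.range (t.length + 1), q ^ i)
            * q ^ invCount b) := by
      apply List.map_congr_left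
      intro b hb
      have hlt : ∀ y ∈ b, x < y := fun y hy =>
        hsort.1 y ((perm_of_mem_permsL hb).mem_iff.1 hy)
      simp only [Function.comp_apply, List.map_map]
      have h1 : (List.map ((fun b => q ^ invCount b) ∘ fun i => b.insertIdx i x)
            (List.range (b.length + 1)))
          = (List.range (b.length + 1)).map (fun i => q ^ invCount b * q ^ i) := by
        apply List.map_congr_left
        intro i hi
        rw [List.mem_range] at hi
        simp only [Function.comp_apply]
        rw [invCount_insertIdx b i (by omega) hlt, pow_add]
      rw [h1, length_mem_permsL hb, list_sum_map_range, ← Finset.mul_sum, mul_comm]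
    rw [h2, List.sum_map_mul_left, ih hsort.2, List.length_cons,
      Finset.prod_range_succ, mul_comm]

/-! #### Tuples dominated by a bound vector -/

/-- All lists `a` with `1 ≤ a i ≤ L i` componentwise. -/
def tuples : List ℕ → List (List ℕ)
  | [] => [[]]
  | m :: t => (List.range' 1 m).flatMap (fun v => (tuples t).map (fun a => v :: a))

lemma mem_tuples_iff : ∀ {L a : List ℕ},
    a ∈ tuples L ↔ List.Forall₂ (fun v m => 1 ≤ v ∧ v ≤ m) a L := by
  intro L
  induction L with
  | nil => intro a; simp [tuples]
  | cons m t ih =>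
    intro a
    simp only [tuples, List.mem_flatMap, List.mem_map, List.mem_range'_1]
    constructor
    · rintro ⟨v, hv, c, hc, rfl⟩
      exact List.forall₂_cons.2 ⟨⟨hv.1, by omega⟩, ih.1 hc⟩
    · intro h
      match a with
      | [] => exact absurd h (by simp)
      | v :: c =>
        rw [List.forall₂_cons] at h
        exact ⟨v, ⟨h.1.1, by omega⟩, c, ih.2 h.2, rfl⟩

lemma nodup_tuples : ∀ (L : List ℕ), (tuples L).Nodup := by
  intro L
  induction L with
  | nil => simp [tuples]
  | cons m t ih =>
    rw [tuples, List.nodup_flatMap]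
    constructor
    · intro v _
      exact ih.map (fun a b h => by injection h)
    · refine (List.nodup_range' (s := 1) (n := m)).imp_of_mem ?_
      intro v w _ _ hvw z hzv hzw
      simp only [List.mem_map] at hzv hzw
      obtain ⟨a, _, rfl⟩ := hzv
      obtain ⟨b, _, heq⟩ := hzw
      exact hvw (by injection heq.symm)

lemma length_tuples : ∀ (L : List ℕ), (tuples L).length = L.prod := by
  intro L
  induction L with
  | nil => simp [tuples]
  | cons m t ih =>
    rw [tuples, List.length_flatMap]
    have : (List.map (List.length ∘ fun v => (tuples t).map (fun a => v :: a))
        (List.range' 1 m)) = (List.range' 1 m).map (fun _ => t.prod) := by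
      apply List.map_congr_left
      intro v _
      simp [ih]
    simp only [Function.comp_def] at this
    rw [this, list_sum_map_const, List.length_range', List.prod_cons]

lemma mem_tuples_length {L a : List ℕ} (ha : a ∈ tuples L) : a.length = L.length :=
  (mem_tuples_iff.1 ha).length_eq

lemma mem_tuples_sum_ge : ∀ {L a : List ℕ}, a ∈ tuples L → a.length ≤ a.sum := by
  intro L
  induction L with
  | nil => intro a ha; simp [tuples] at ha; simp [ha]
  | cons m t ih =>
    intro a ha
    simp only [tuples, List.mem_flatMap, List.mem_map, List.mem_range'_1] at ha
    obtain ⟨v, hv, c, hc, rfl⟩ := ha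
    have := ih hc
    simp only [List.length_cons, List.sum_cons]
    omega

lemma list_sum_map_range'_pow (p : ℚ) (m : ℕ) :
    ((List.range' 1 m).map (fun v => p ^ (v - 1))).sum = ∑ t ∈ Finset.range m, p ^ t := by
  rw [List.range'_eq_map_range, List.map_map, list_sum_map_range]
  apply Finset.sum_congr rfl
  intro i _
  simp [Nat.add_comm 1 i]

lemma sum_tuples (p : ℚ) : ∀ (L : List ℕ),
    ((tuples L).map (fun a => p ^ (a.sum - a.length))).sum
      = (L.map (fun m => ∑ t ∈ Finset.range m, p ^ t)).prod := by
  intro L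
  induction L with
  | nil => simp [tuples]
  | cons m t ih =>
    rw [tuples, List.map_flatMap, List.flatMap_def, List.sum_flatten, List.map_map]
    have h1 : (List.map (List.sum ∘ fun v => List.map (fun a => p ^ (a.sum - a.length))
          (List.map (fun a => v :: a) (tuples t))) (List.range' 1 m))
        = (List.range' 1 m).map (fun v => p ^ (v - 1) *
            ((tuples t).map (fun a => p ^ (a.sum - a.length))).sum) := by
      apply List.map_congr_left
      intro v hv
      rw [List.mem_range'_1] at hv
      simp only [Function.comp_apply, List.map_map]
      have h2 : (List.map ((fun a => p ^ (a.sum - a.length)) ∘ fun a => v :: a) (tuples t))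
          = (tuples t).map (fun a => p ^ (v - 1) * p ^ (a.sum - a.length)) := by
        apply List.map_congr_left
        intro a ha
        simp only [Function.comp_apply, List.sum_cons, List.length_cons]
        rw [← pow_add]
        congr 1
        have := mem_tuples_sum_ge ha
        omega
      rw [h2, List.sum_map_mul_left]
    rw [h1]
    have h3 : (List.range' 1 m).map (fun v => p ^ (v - 1) *
          ((tuples t).map (fun a => p ^ (a.sum - a.length))).sum)
        = (List.range' 1 m).map (fun v => ((tuples t).map
            (fun a => p ^ (a.sum - a.length))).sum * p ^ (v - 1)) := by
      apply List.map_congr_left; intro v _; ring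
    rw [h3, List.sum_map_mul_left, list_sum_map_range'_pow, ih, List.map_cons, List.prod_cons]
    ring

/-! #### The list of labeled parking functions -/

/-- All labeled parking functions of size `n`, as an explicit list. -/
def lpf (n : ℕ) : List (List ℕ × List ℕ) :=
  (permsL (List.range' 1 n)).flatMap (fun b => (tuples b).map (fun a => (a, b)))

lemma mem_lpf_iff' {n : ℕ} {ab : List ℕ × List ℕ} :
    ab ∈ lpf n ↔ ab.2.Perm (List.range' 1 n) ∧ ab.1 ∈ tuples ab.2 := by
  simp only [lpf, List.mem_flatMap, List.mem_map]
  constructor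
  · rintro ⟨b, hb, a, ha, rfl⟩
    exact ⟨perm_of_mem_permsL hb, ha⟩
  · rintro ⟨hb, ha⟩
    exact ⟨ab.2, mem_permsL_of_perm hb, ab.1, ha, rfl⟩

lemma nodup_lpf (n : ℕ) : (lpf n).Nodup := by
  rw [lpf, List.nodup_flatMap]
  constructor
  · intro b _
    exact (nodup_tuples b).map (fun a c h => by injection h)
  · refine (nodup_permsL (List.nodup_range' (s := 1) (n := n))).imp_of_mem ?_
    intro b c _ _ hbc z hzb hzc
    simp only [List.mem_map] at hzb hzc
    obtain ⟨a, _, rfl⟩ := hzb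
    obtain ⟨a', _, heq⟩ := hzc
    exact hbc (by injection heq.symm)

/-! #### The counting argument for the parking property -/

lemma forall₂_getD {R : ℕ → ℕ → Prop} : ∀ {a b : List ℕ}, List.Forall₂ R a b →
    ∀ i < a.length, R (a.getD i 0) (b.getD i 0) := by
  intro a
  induction a with
  | nil => intro b _ i hi; simp at hi
  | cons x t ih =>
    intro b hab i hi
    match b with
    | [] => exact absurd hab (by simp)
    | y :: s =>
      rw [List.forall₂_cons] at hab
      match i with
      | 0 => simpa using hab.1
      | j + 1 =>
        simp only [List.getD_cons_succ]
        exact ih hab.2 j (by simpa using hi)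

lemma forall₂_of_getD {R : ℕ → ℕ → Prop} : ∀ {a b : List ℕ}, a.length = b.length →
    (∀ i < a.length, R (a.getD i 0) (b.getD i 0)) → List.Forall₂ R a b := by
  intro a
  induction a with
  | nil =>
    intro b hlen _
    match b with
    | [] => exact List.Forall₂.nil
    | y :: s => simp at hlen
  | cons x t ih =>
    intro b hlen h
    match b with
    | [] => simp at hlen
    | y :: s =>
      refine List.forall₂_cons.2 ⟨by simpa using h 0 (by simp), ?_⟩
      refine ih (by simpa using hlen) ?_
      intro i hi
      have := h (i + 1) (by simpa using Nat.succ_lt_succ hi)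
      simpa using this

lemma forall₂_mem {R : ℕ → ℕ → Prop} : ∀ {a b : List ℕ}, List.Forall₂ R a b →
    ∀ x ∈ a, ∃ y ∈ b, R x y := by
  intro a
  induction a with
  | nil => intro b _ x hx; simp at hx
  | cons z t ih =>
    intro b hab x hx
    match b with
    | [] => exact absurd hab (by simp)
    | y :: s =>
      rw [List.forall₂_cons] at hab
      rcases List.mem_cons.1 hx with h | h
      · exact ⟨y, (List.mem_cons_self (a := y) (l := s)), h ▸ hab.1⟩
      · obtain ⟨w, hw, hR⟩ := ih hab.2 x h
        exact ⟨w, List.mem_cons_of_mem y hw, hR⟩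

lemma countP_le_of_forall₂ (c : ℕ) : ∀ {a b : List ℕ},
    List.Forall₂ (fun v m => 1 ≤ v ∧ v ≤ m) a b →
    b.countP (fun y => y ≤ c) ≤ a.countP (fun y => y ≤ c) := by
  intro a
  induction a with
  | nil =>
    intro b hab
    cases hab
    simp
  | cons x t ih =>
    intro b hab
    match b with
    | [] => exact absurd hab (by simp)
    | y :: s =>
      rw [List.forall₂_cons] at hab
      rw [List.countP_cons, List.countP_cons]
      have h1 := ih hab.2
      by_cases hy : y ≤ c
      · have hx0 : x ≤ c := le_trans hab.1.2 hy
        rw [if_pos (by simpa using hy), if_pos (by simpa using hx0)]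
        omega
      · rw [if_neg (by simpa using hy)]
        split <;> omega

lemma countP_range' (c n : ℕ) :
    (List.range' 1 n).countP (fun y => y ≤ c) = min c n := by
  induction n with
  | zero => simp
  | succ k ih =>
    rw [List.range'_1_concat, List.countP_append, ih]
    by_cases h : 1 + k ≤ c <;> simp [h] <;> omega

lemma sorted_getD_le {c : ℕ} : ∀ {s : List ℕ}, s.Pairwise (· ≤ ·) → ∀ {i : ℕ},
    i < s.countP (fun y => y ≤ c) → s.getD i 0 ≤ c := by
  intro s
  induction s with
  | nil => intro _ i hi; simp at hi
  | cons x t ih =>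
    intro hs i hi
    rw [List.pairwise_cons] at hs
    match i with
    | 0 =>
      rw [List.getD_cons_zero]
      have hpos : 0 < (x :: t).countP (fun y => y ≤ c) := by omega
      obtain ⟨y, hy, hyc⟩ := List.countP_pos_iff.1 hpos
      simp only [decide_eq_true_eq] at hyc
      rcases List.mem_cons.1 hy with h | h
      · omega
      · exact le_trans (hs.1 y h) hyc
    | j + 1 =>
      rw [List.getD_cons_succ]
      refine ih hs.2 ?_
      rw [List.countP_cons] at hi
      split at hi <;> omega

end Aux

section Main

open List

lemma prod_range'_factorial (n : ℕ) : (List.range' 1 n).prod = n.factorial := by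
  induction n with
  | zero => rfl
  | succ k ih =>
    rw [List.range'_1_concat, List.prod_append, ih, Nat.factorial_succ]
    simp [Nat.mul_comm, Nat.add_comm]

lemma list_prod_map_range (n : ℕ) (f : ℕ → ℚ) :
    ((List.range n).map f).prod = ∏ i ∈ Finset.range n, f i := by
  induction n with
  | zero => simp
  | succ k ih => rw [List.range_succ, List.map_append, List.prod_append,
      Finset.prod_range_succ, ih]; simp

lemma prod_map_range'_geom (p : ℚ) (n : ℕ) :
    ((List.range' 1 n).map (fun m => ∑ t ∈ Finset.range m, p ^ t)).prod
      = ∏ i ∈ Finset.range n, ∑ t ∈ Finset.range (i + 1), p ^ t := by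
  rw [List.range'_eq_map_range, List.map_map, list_prod_map_range]
  apply Finset.prod_congr rfl
  intro i _
  simp [Nat.add_comm 1 i]

lemma mem_lpf_iff {n : ℕ} {ab : List ℕ × List ℕ} :
    ab ∈ lpf n ↔ IsLabeledParking n ab := by
  obtain ⟨a, b⟩ := ab
  rw [mem_lpf_iff']
  dsimp only [IsLabeledParking, IsParking]
  constructor
  · rintro ⟨hperm, hmem⟩
    have hf := mem_tuples_iff.1 hmem
    have hblen : b.length = n := by rw [hperm.length_eq, List.length_range']
    have halen : a.length = n := by rw [hf.length_eq, hblen]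
    have hbound : ∀ x ∈ a, 1 ≤ x ∧ x ≤ n := by
      intro x hx
      obtain ⟨y, hy, h1, h2⟩ := forall₂_mem hf x hx
      have hyn : y < 1 + n := (List.mem_range'_1.1 (hperm.subset hy)).2
      exact ⟨h1, by omega⟩
    refine ⟨⟨halen, hbound, ?_⟩, hperm, ?_⟩
    · set s := a.insertionSort (· ≤ ·) with hs
      have hsp : s.Perm a := List.perm_insertionSort _ a
      have hss : s.Pairwise (· ≤ ·) := List.pairwise_insertionSort _ a
      refine ⟨s, hsp, hss, ?_⟩
      intro i hi
      apply sorted_getD_le hss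
      have hca : s.countP (fun y => y ≤ i + 1) = a.countP (fun y => y ≤ i + 1) :=
        hsp.countP_eq _
      have hbc : b.countP (fun y => y ≤ i + 1) = min (i + 1) n := by
        rw [hperm.countP_eq, countP_range']
      have hle := countP_le_of_forall₂ (i + 1) hf
      omega
    · intro i hi
      exact (forall₂_getD hf i (by omega)).2
  · rintro ⟨⟨halen, hbound, _⟩, hperm, hdom⟩
    have hblen : b.length = n := by rw [hperm.length_eq, List.length_range']
    refine ⟨hperm, mem_tuples_iff.2 ?_⟩
    refine forall₂_of_getD (by rw [halen, hblen]) ?_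
    intro i hi
    rw [halen] at hi
    refine ⟨?_, hdom i hi⟩
    have hmem : a.getD i 0 ∈ a := by
      rw [List.getD_eq_getElem a 0 (by omega)]
      exact List.getElem_mem _
    exact (hbound _ hmem).1

theorem labeled_parking (n : ℕ) :
    {ab : List ℕ × List ℕ | IsLabeledParking n ab}.ncard = (Nat.factorial n) ^ 2 ∧
    ∀ p q : ℚ,
      (∑ᶠ ab ∈ {ab : List ℕ × List ℕ | IsLabeledParking n ab},
        p ^ (ab.1.sum - n) * q ^ invCount ab.2)
      = ∏ i ∈ Finset.range n,
          ((∑ t ∈ Finset.range (i + 1), p ^ t) * (∑ t ∈ Finset.range (i + 1), q ^ t)) := by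
  have hset : {ab : List ℕ × List ℕ | IsLabeledParking n ab} = ↑(lpf n).toFinset := by
    ext ab
    simp [List.mem_toFinset, mem_lpf_iff]
  constructor
  · rw [hset, Set.ncard_coe_finset, List.toFinset_card_of_nodup (nodup_lpf n)]
    rw [lpf, List.length_flatMap]
    have h1 : (List.map (List.length ∘ fun b => (tuples b).map (fun a => (a, b)))
        (permsL (List.range' 1 n)))
        = (permsL (List.range' 1 n)).map (fun _ => n.factorial) := by
      apply List.map_congr_left
      intro b hb
      simp only [Function.comp_apply, List.length_map]
      rw [length_tuples, (perm_of_mem_permsL hb).prod_eq, prod_range'_factorial]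
    simp only [Function.comp_def] at h1
    rw [h1, list_sum_map_const, length_permsL, List.length_range', sq]
  · intro p q
    rw [hset, finsum_mem_coe_finset, List.sum_toFinset _ (nodup_lpf n)]
    rw [lpf, List.map_flatMap, List.flatMap_def, List.sum_flatten, List.map_map]
    have h2 : (List.map (List.sum ∘ fun b => List.map
          (fun ab : List ℕ × List ℕ => p ^ (ab.1.sum - n) * q ^ invCount ab.2)
          (List.map (fun a => (a, b)) (tuples b))) (permsL (List.range' 1 n)))
        = (permsL (List.range' 1 n)).map (fun b =>
            (∏ i ∈ Finset.range n, ∑ t ∈ Finset.range (i + 1), p ^ t) * q ^ invCount b) := by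
      apply List.map_congr_left
      intro b hb
      have hblen : b.length = n := by
        rw [length_mem_permsL hb, List.length_range']
      simp only [Function.comp_apply, List.map_map]
      have e1 : (List.map ((fun ab : List ℕ × List ℕ =>
            p ^ (ab.1.sum - n) * q ^ invCount ab.2) ∘ fun a => (a, b)) (tuples b))
          = (tuples b).map (fun a => q ^ invCount b * p ^ (a.sum - a.length)) := by
        apply List.map_congr_left
        intro a ha
        simp only [Function.comp_apply]
        have hal : a.length = n := by rw [mem_tuples_length ha, hblen]
        rw [← hal, mul_comm]
      rw [e1, List.sum_map_mul_left, sum_tuples]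
      have e2 : (b.map (fun m => ∑ t ∈ Finset.range m, p ^ t)).prod
          = ∏ i ∈ Finset.range n, ∑ t ∈ Finset.range (i + 1), p ^ t := by
        rw [((perm_of_mem_permsL hb).map _).prod_eq, prod_map_range'_geom]
      rw [e2, mul_comm]
    rw [h2, List.sum_map_mul_left]
    have hsorted : (List.range' 1 n).Pairwise (· < ·) := List.pairwise_lt_range' (s := 1) (n := n)
    rw [sum_permsL q _ hsorted, List.length_range', ← Finset.prod_mul_distrib]

end Main
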